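/- Let A be an n×n real symmetric positive semidefinite matrix and let I, J be index sets of cardinality k. Then det(A(I,J))^2 ≤ det(A(I,I)) · det(A(J,J)), where A(I,J) denotes the submatrix of A with rows indexed by I and columns indexed by J. -/

import Mathlib

open Matrix

variable {k : ℕ}

lemma psd_det_nonneg {m : Type*} [Fintype m] [DecidableEq m]
    {X : Matrix m m ℝ} (hX : X.PosSemidef) : 0 ≤ X.det := by
  rw [hX.1.det_eq_prod_eigenvalues]
  exact Finset.prod_nonneg fun i _ => by exact_mod_cast hX.eigenvalues_nonneg i

lemma psd_posDef_of_det_ne_zero {m : Type*} [Fintype m] [DecidableEq m]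
    {X : Matrix m m ℝ} (hX : X.PosSemidef) (h : X.det ≠ 0) : X.PosDef := by
  refine Matrix.PosDef.of_dotProduct_mulVec_pos hX.1 fun x hx => lt_of_le_of_ne (hX.dotProduct_mulVec_nonneg x) fun h0 => ?_
  have hx0 : X *ᵥ x = 0 := (hX.dotProduct_mulVec_zero_iff x).mp h0.symm
  exact h (Matrix.exists_mulVec_eq_zero_iff.mp ⟨x, hx, hx0⟩)

lemma det_one_add_psd {Z : Matrix (Fin k) (Fin k) ℝ} (hZ : Z.PosSemidef) :
    1 ≤ (1 + Z).det := by
  have hspec := hZ.1.spectral_theorem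
  rw [Unitary.conjStarAlgAut_apply] at hspec
  set U : Matrix (Fin k) (Fin k) ℝ := (hZ.1.eigenvectorUnitary : Matrix (Fin k) (Fin k) ℝ) with hUdef
  have hU : U * star U = 1 := Matrix.mem_unitaryGroup_iff.mp hZ.1.eigenvectorUnitary.2
  have hU' : star U * U = 1 := Matrix.mem_unitaryGroup_iff'.mp hZ.1.eigenvectorUnitary.2
  have key : 1 + Z = U * (1 + diagonal (RCLike.ofReal ∘ hZ.1.eigenvalues)) * star U := by
    rw [mul_add, add_mul, mul_one, hU, ← hspec]
  rw [key, det_mul, det_mul, mul_comm, ← mul_assoc, ← det_mul, hU', det_one, one_mul]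
  have : (1 : Matrix (Fin k) (Fin k) ℝ) + diagonal (RCLike.ofReal ∘ hZ.1.eigenvalues)
      = diagonal (fun i => 1 + hZ.1.eigenvalues i) := by
    rw [← diagonal_one, diagonal_add]
    rfl
  rw [this, det_diagonal]
  calc (1:ℝ) = ∏ _i : Fin k, 1 := by simp
  _ ≤ ∏ i, (1 + hZ.1.eigenvalues i) := by
      refine Finset.prod_le_prod (fun i _ => zero_le_one) fun i _ => ?_
      have := hZ.eigenvalues_nonneg i
      linarith

open scoped MatrixOrder in
lemma det_le_det_add {X Y : Matrix (Fin k) (Fin k) ℝ}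
    (hX : X.PosSemidef) (hY : Y.PosSemidef) : X.det ≤ (X + Y).det := by
  by_cases h : X.det = 0
  · rw [h]; exact psd_det_nonneg (hX.add hY)
  · have hR : CFC.sqrt X * CFC.sqrt X = X := CFC.sqrt_mul_sqrt_self X hX.nonneg
    set R := CFC.sqrt X with hRdef
    have hRdet : R.det ≠ 0 := fun h0 => h (by rw [← hR, det_mul, h0, zero_mul])
    haveI : Invertible R := invertibleOfIsUnitDet _ (Ne.isUnit hRdet)
    have hRH : Rᴴ = R := (CFC.sqrt_nonneg X).posSemidef.1
    have hZ : (R⁻¹ * Y * R⁻¹).PosSemidef := by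
      have := hY.conjTranspose_mul_mul_same (B := R⁻¹)
      rwa [conjTranspose_nonsing_inv, hRH] at this
    have key : X + Y = R * (1 + R⁻¹ * Y * R⁻¹) * R := by
      rw [mul_add, mul_one, add_mul, hR]
      congr 1
      simp only [mul_assoc, Matrix.inv_mul_of_invertible, mul_one]
      rw [← mul_assoc, Matrix.mul_inv_of_invertible, one_mul]
    have h1 : 1 ≤ (1 + R⁻¹ * Y * R⁻¹).det := det_one_add_psd hZ
    have hXdet : 0 < X.det := lt_of_le_of_ne (psd_det_nonneg hX) (Ne.symm h)
    have hRR : R.det * R.det = X.det := by rw [← det_mul, hR]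
    rw [key, det_mul, det_mul]
    nlinarith [h1, hXdet, hRR]

lemma det_block_sq_le {P B Q : Matrix (Fin k) (Fin k) ℝ}
    (hM : (fromBlocks P B Bᴴ Q).PosSemidef) : B.det ^ 2 ≤ P.det * Q.det := by
  have hP : P.PosSemidef := by
    have := hM.submatrix (Sum.inl : Fin k → Fin k ⊕ Fin k)
    convert this using 2; ext i j; rfl
  have hQ : Q.PosSemidef := by
    have := hM.submatrix (Sum.inr : Fin k → Fin k ⊕ Fin k)
    convert this using 2; ext i j; rfl
  by_cases hdP : P.det = 0
  · have hB : B.det = 0 := by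
      obtain ⟨v, hv, hPv⟩ := Matrix.exists_mulVec_eq_zero_iff.mpr hdP
      have h0 : star (Sum.elim v 0) ⬝ᵥ (fromBlocks P B Bᴴ Q *ᵥ Sum.elim v 0) = 0 := by
        rw [fromBlocks_mulVec]
        simp [hPv, dotProduct]
      have := (hM.dotProduct_mulVec_zero_iff (Sum.elim v 0)).mp h0
      rw [fromBlocks_mulVec] at this
      have hBv : Bᴴ *ᵥ v = 0 := by
        funext i
        have h2 := congrFun this (Sum.inr i)
        simpa using h2
      have : Bᴴ.det = 0 := Matrix.exists_mulVec_eq_zero_iff.mp ⟨v, hv, hBv⟩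
      rw [conjTranspose_eq_transpose_of_trivial, det_transpose] at this
      exact this
    rw [hB, hdP]
    simp [psd_det_nonneg hQ]
  · have hPpd : P.PosDef := psd_posDef_of_det_ne_zero hP hdP
    haveI : Invertible P := invertibleOfIsUnitDet _ (Ne.isUnit hdP)
    have hS : (Q - Bᴴ * P⁻¹ * B).PosSemidef :=
      (PosDef.fromBlocks₁₁ B Q hPpd).mp hM
    have hK : (Bᴴ * P⁻¹ * B).PosSemidef := hPpd.posSemidef.inv.conjTranspose_mul_mul_same B
    have hle : (Bᴴ * P⁻¹ * B).det ≤ Q.det := by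
      have := det_le_det_add hK hS
      rwa [add_sub_cancel] at this
    have hKdet : (Bᴴ * P⁻¹ * B).det = B.det ^ 2 * (P.det)⁻¹ := by
      rw [det_mul, det_mul, det_nonsing_inv, Ring.inverse_eq_inv',
        conjTranspose_eq_transpose_of_trivial, det_transpose]
      ring
    have hPpos : 0 < P.det := hPpd.det_pos
    rw [hKdet] at hle
    calc B.det ^ 2 = P.det * (B.det ^ 2 * (P.det)⁻¹) := by field_simp
    _ ≤ P.det * Q.det := by exact mul_le_mul_of_nonneg_left hle hPpos.le



/-- The `k × k` submatrix of `A` with rows indexed by `I` and columns by `J`. -/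
noncomputable def subm {n k : ℕ} (A : Matrix (Fin n) (Fin n) ℝ)
    (I J : Finset (Fin n)) (hI : I.card = k) (hJ : J.card = k) :
    Matrix (Fin k) (Fin k) ℝ :=
  A.submatrix (fun i => (I.orderIsoOfFin hI i : Fin n)) (fun j => (J.orderIsoOfFin hJ j : Fin n))

/-- For a symmetric positive semidefinite `A`,
`det(A(I,J))² ≤ det(A(I,I)) · det(A(J,J))`. -/
theorem det_submatrix_sq_le_of_posSemidef {n k : ℕ} (A : Matrix (Fin n) (Fin n) ℝ)
    (hA : A.PosSemidef) (I J : Finset (Fin n)) (hI : I.card = k) (hJ : J.card = k) :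
    (subm A I J hI hJ).det ^ 2 ≤ (subm A I I hI hI).det * (subm A J J hJ hJ).det := by
  have hsym : ∀ a b, A a b = A b a := fun a b => by
    have := congrFun (congrFun hA.1 b) a
    simpa [Matrix.conjTranspose_apply] using this
  set f : Fin k ⊕ Fin k → Fin n :=
    Sum.elim (fun i => (I.orderIsoOfFin hI i : Fin n)) (fun j => (J.orderIsoOfFin hJ j : Fin n))
    with hf
  have hM : (A.submatrix f f).PosSemidef := hA.submatrix f
  have hblk : A.submatrix f f =
      fromBlocks (subm A I I hI hI) (subm A I J hI hJ) (subm A I J hI hJ)ᴴ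
        (subm A J J hJ hJ) := by
    ext i j
    cases i with
    | inl i => cases j with
      | inl j => rfl
      | inr j => rfl
    | inr i => cases j with
      | inl j =>
        simp only [Matrix.submatrix_apply, hf, Sum.elim_inr, Sum.elim_inl,
          Matrix.fromBlocks_apply₂₁, Matrix.conjTranspose_apply, subm, star_trivial]
        exact hsym _ _
      | inr j => rfl
  rw [hblk] at hM
  exact det_block_sq_le hM
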